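/- Let U ⊆ ℝ_t × ℝ²_x be open, let h and v¹, v² be C² on U with h > 0, and suppose they solve the 2D rotating shallow water system B h = −h div v, B v¹ = v² − ∂₁h, B v² = −v¹ − ∂₂h on U. Set ρ = ln h, η = √h, ζ = (∂₁v² − ∂₂v¹) e^{−ρ}, ξ = ζ + e^{−ρ}, and let g be the acoustical metric built from (η, v¹, v²) with wave operator □_g. Then for i = 1, 2 the velocity components satisfy the covariant wave equation □_g v^i = −ε_{ia} e^{ρ} ∂_a ξ + 2ζ (ε_{ij} B v^j + v^i) − ½ g^{αβ} ∂_α v^i ∂_β ρ + e^{−ρ} v^i + e^{−ρ} ε_{ij} v^j Bρ on U (summation over repeated Latin indices a, j). -/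

import Mathlib

/-- Partial derivative in the `i`-th coordinate direction of spacetime
`ℝ³ ≃ (Fin 3 → ℝ)`, coordinates `(x⁰, x¹, x²) = (t, x₁, x₂)`. -/
noncomputable def pd (i : Fin 3) (f : (Fin 3 → ℝ) → ℝ) (x : Fin 3 → ℝ) : ℝ :=
  fderiv ℝ f x (Pi.single i 1)

/-- Material derivative `B = ∂ₜ + v¹∂₁ + v²∂₂`. -/
noncomputable def matD (v1 v2 f : (Fin 3 → ℝ) → ℝ) (x : Fin 3 → ℝ) : ℝ :=
  pd 0 f x + v1 x * pd 1 f x + v2 x * pd 2 f x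

/-- The acoustical metric field `g₀₀ = −η² + |v|²`, `g₀ᵢ = gᵢ₀ = −vⁱ`, `g_{ij} = δ_{ij}`. -/
noncomputable def gMat (η v1 v2 : (Fin 3 → ℝ) → ℝ) (x : Fin 3 → ℝ) :
    Matrix (Fin 3) (Fin 3) ℝ :=
  !![-(η x) ^ 2 + (v1 x) ^ 2 + (v2 x) ^ 2, -(v1 x), -(v2 x);
     -(v1 x), 1, 0;
     -(v2 x), 0, 1]

/-- Pointwise inverse `g^{αβ}` of the acoustical metric. -/
noncomputable def gInv (η v1 v2 : (Fin 3 → ℝ) → ℝ) (x : Fin 3 → ℝ) :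
    Matrix (Fin 3) (Fin 3) ℝ :=
  (gMat η v1 v2 x)⁻¹

/-- Christoffel symbols of the first kind
`Γ_{αβγ} = ½(∂_α g_{βγ} + ∂_β g_{αγ} − ∂_γ g_{αβ})` of the acoustical metric. -/
noncomputable def Γfst (η v1 v2 : (Fin 3 → ℝ) → ℝ) (α β γ : Fin 3) (x : Fin 3 → ℝ) : ℝ :=
  (pd α (fun y => gMat η v1 v2 y β γ) x + pd β (fun y => gMat η v1 v2 y α γ) x
    - pd γ (fun y => gMat η v1 v2 y α β) x) / 2

/-- Christoffel symbols of the second kind `Γ^γ_{αβ} = g^{γδ} Γ_{αβδ}`. -/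
noncomputable def Γsnd (η v1 v2 : (Fin 3 → ℝ) → ℝ) (γ α β : Fin 3) (x : Fin 3 → ℝ) : ℝ :=
  ∑ d : Fin 3, gInv η v1 v2 x γ d * Γfst η v1 v2 α β d x

/-- Wave operator `□_g f = g^{αβ} ∂_α ∂_β f − g^{αβ} Γ^γ_{αβ} ∂_γ f` of the acoustical
metric. -/
noncomputable def box (η v1 v2 f : (Fin 3 → ℝ) → ℝ) (x : Fin 3 → ℝ) : ℝ :=
  (∑ α : Fin 3, ∑ β : Fin 3, gInv η v1 v2 x α β * pd α (pd β f) x)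
    - ∑ α : Fin 3, ∑ β : Fin 3, ∑ γ : Fin 3,
        gInv η v1 v2 x α β * Γsnd η v1 v2 γ α β x * pd γ f x

section infra
variable {f g : (Fin 3 → ℝ) → ℝ} {x : Fin 3 → ℝ} {i j : Fin 3}

theorem pd_congr (hfg : f =ᶠ[nhds x] g) : pd i f x = pd i g x := by
  unfold pd; rw [hfg.fderiv_eq]

theorem pd_const (c : ℝ) : pd i (fun _ => c) x = 0 := by
  simp [pd]

theorem pd_add (hf : DifferentiableAt ℝ f x) (hg : DifferentiableAt ℝ g x) :
    pd i (fun y => f y + g y) x = pd i f x + pd i g x := by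
  unfold pd; rw [fderiv_fun_add hf hg]; rfl

theorem pd_sub (hf : DifferentiableAt ℝ f x) (hg : DifferentiableAt ℝ g x) :
    pd i (fun y => f y - g y) x = pd i f x - pd i g x := by
  unfold pd; rw [fderiv_fun_sub hf hg]; rfl

theorem pd_neg : pd i (fun y => -(f y)) x = -pd i f x := by
  unfold pd; rw [fderiv_fun_neg]; rfl

theorem pd_mul (hf : DifferentiableAt ℝ f x) (hg : DifferentiableAt ℝ g x) :
    pd i (fun y => f y * g y) x = f x * pd i g x + g x * pd i f x := by
  unfold pd; rw [fderiv_fun_mul hf hg]; rfl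

theorem pd_sq (hf : DifferentiableAt ℝ f x) :
    pd i (fun y => (f y) ^ 2) x = 2 * f x * pd i f x := by
  have : (fun y => (f y) ^ 2) = fun y => f y * f y := by ext y; ring
  rw [this, pd_mul hf hf]; ring

theorem pd_log (hf : DifferentiableAt ℝ f x) (hx : f x ≠ 0) :
    pd i (fun y => Real.log (f y)) x = pd i f x / f x := by
  unfold pd
  rw [(hf.hasFDerivAt.log hx).fderiv]
  simp [div_eq_inv_mul]

theorem pd_inv (hf : DifferentiableAt ℝ f x) (hx : f x ≠ 0) :
    pd i (fun y => (f y)⁻¹) x = -pd i f x / (f x) ^ 2 := by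
  have h1 : HasFDerivAt (fun y => (f y)⁻¹)
      ((-((f x) ^ 2)⁻¹) • fderiv ℝ f x) x :=
    (hasDerivAt_inv hx).comp_hasFDerivAt x hf.hasFDerivAt
  unfold pd
  rw [h1.fderiv]
  simp [div_eq_inv_mul]

theorem diffAt_fderiv (hf : ContDiffAt ℝ 2 f x) : DifferentiableAt ℝ (fderiv ℝ f) x :=
  (hf.fderiv_right (m := 1) (le_refl 2)).differentiableAt (by norm_num)

@[fun_prop]
theorem differentiableAt_pd (hf : ContDiffAt ℝ 2 f x) (j : Fin 3) :
    DifferentiableAt ℝ (pd j f) x := by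
  have : pd j f = fun y => (ContinuousLinearMap.apply ℝ ℝ (Pi.single j 1)) (fderiv ℝ f y) := rfl
  rw [this]
  exact (ContinuousLinearMap.apply ℝ ℝ (Pi.single j 1)).differentiableAt.comp x (diffAt_fderiv hf)

@[fun_prop]
theorem differentiableAt_of_contDiffAt2 (hf : ContDiffAt ℝ 2 f x) : DifferentiableAt ℝ f x :=
  hf.differentiableAt two_ne_zero

theorem pd_pd (hf : ContDiffAt ℝ 2 f x) (i j : Fin 3) :
    pd i (pd j f) x = fderiv ℝ (fderiv ℝ f) x (Pi.single i 1) (Pi.single j 1) := by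
  have h1 := ((ContinuousLinearMap.apply ℝ ℝ (Pi.single j 1)).hasFDerivAt.comp x
    (diffAt_fderiv hf).hasFDerivAt)
  calc pd i (pd j f) x
      = (fderiv ℝ ((ContinuousLinearMap.apply ℝ ℝ (Pi.single j 1)) ∘ fderiv ℝ f) x)
          (Pi.single i 1) := rfl
    _ = _ := by rw [h1.fderiv]; rfl

theorem pd_pd_comm (hf : ContDiffAt ℝ 2 f x) (i j : Fin 3) :
    pd i (pd j f) x = pd j (pd i f) x := by
  rw [pd_pd hf, pd_pd hf]
  exact hf.isSymmSndFDerivAt (by simp) _ _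

end infra

set_option maxHeartbeats 4000000 in
/-- Covariant wave equations for the velocity of the 2D rotating shallow water system:
for `i = 1, 2`,
`□_g v^i = −ε_{ia} e^ρ ∂_a ξ + 2ζ(ε_{ij} B v^j + v^i) − ½ g^{αβ}∂_α v^i ∂_β ρ
  + e^{−ρ} v^i + e^{−ρ} ε_{ij} v^j Bρ`,
with `ρ = ln h`, `η = √h`, `ζ = (∂₁v² − ∂₂v¹)e^{−ρ}`, `ξ = ζ + e^{−ρ}`, `ε₁₂ = 1 = −ε₂₁`.
The two conjuncts are the cases `i = 1` and `i = 2`. -/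
theorem covariant_wave_equation_velocity
    (U : Set (Fin 3 → ℝ)) (hU : IsOpen U)
    (h v1 v2 : (Fin 3 → ℝ) → ℝ)
    (hh : ContDiffOn ℝ 2 h U)
    (hv1 : ContDiffOn ℝ 2 v1 U) (hv2 : ContDiffOn ℝ 2 v2 U)
    (hpos : ∀ x ∈ U, 0 < h x)
    (hmass : ∀ x ∈ U, matD v1 v2 h x = -(h x) * (pd 1 v1 x + pd 2 v2 x))
    (hmom1 : ∀ x ∈ U, matD v1 v2 v1 x = v2 x - pd 1 h x)
    (hmom2 : ∀ x ∈ U, matD v1 v2 v2 x = -v1 x - pd 2 h x) :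
    ∀ x ∈ U,
      (box (fun y => Real.sqrt (h y)) v1 v2 v1 x
        = -(Real.exp (Real.log (h x)))
            * pd 2 (fun y => (pd 1 v2 y - pd 2 v1 y) * Real.exp (-(Real.log (h y)))
                + Real.exp (-(Real.log (h y)))) x
          + 2 * ((pd 1 v2 x - pd 2 v1 x) * Real.exp (-(Real.log (h x))))
              * (matD v1 v2 v2 x + v1 x)
          - (1 / 2) * ∑ α : Fin 3, ∑ β : Fin 3,
              gInv (fun y => Real.sqrt (h y)) v1 v2 x α β
                * pd α v1 x * pd β (fun y => Real.log (h y)) x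
          + Real.exp (-(Real.log (h x))) * v1 x
          + Real.exp (-(Real.log (h x))) * v2 x
              * matD v1 v2 (fun y => Real.log (h y)) x) ∧
      (box (fun y => Real.sqrt (h y)) v1 v2 v2 x
        = Real.exp (Real.log (h x))
            * pd 1 (fun y => (pd 1 v2 y - pd 2 v1 y) * Real.exp (-(Real.log (h y)))
                + Real.exp (-(Real.log (h y)))) x
          + 2 * ((pd 1 v2 x - pd 2 v1 x) * Real.exp (-(Real.log (h x))))
              * (-(matD v1 v2 v1 x) + v2 x)
          - (1 / 2) * ∑ α : Fin 3, ∑ β : Fin 3,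
              gInv (fun y => Real.sqrt (h y)) v1 v2 x α β
                * pd α v2 x * pd β (fun y => Real.log (h y)) x
          + Real.exp (-(Real.log (h x))) * v2 x
          - Real.exp (-(Real.log (h x))) * v1 x
              * matD v1 v2 (fun y => Real.log (h y)) x) := by
  intro x hx
  have hmem : U ∈ nhds x := hU.mem_nhds hx
  have hhx : ContDiffAt ℝ 2 h x := hh.contDiffAt hmem
  have hv1x : ContDiffAt ℝ 2 v1 x := hv1.contDiffAt hmem
  have hv2x : ContDiffAt ℝ 2 v2 x := hv2.contDiffAt hmem
  have hxpos : 0 < h x := hpos x hx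
  have hne : h x ≠ 0 := ne_of_gt hxpos
  -- exp(-log h) = h⁻¹ near x
  have hEinv : (fun y => Real.exp (-(Real.log (h y)))) =ᶠ[nhds x] fun y => (h y)⁻¹ := by
    filter_upwards [hmem] with y hy
    rw [Real.exp_neg, Real.exp_log (hpos y hy)]
  have hexpinv : Real.exp (-(Real.log (h x))) = (h x)⁻¹ := by
    rw [Real.exp_neg, Real.exp_log hxpos]
  -- pd of log ∘ h
  have hlog : ∀ b : Fin 3, pd b (fun y => Real.log (h y)) x = pd b h x / h x := by
    intro b; exact pd_log (differentiableAt_of_contDiffAt2 hhx) hne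
  -- pd of the ξ function
  have hXi : ∀ a : Fin 3,
      pd a (fun y => (pd 1 v2 y - pd 2 v1 y) * Real.exp (-(Real.log (h y)))
          + Real.exp (-(Real.log (h y)))) x
        = (pd 1 v2 x - pd 2 v1 x) * (-pd a h x / (h x) ^ 2)
          + (h x)⁻¹ * (pd a (pd 1 v2) x - pd a (pd 2 v1) x)
          + -pd a h x / (h x) ^ 2 := by
    intro a
    have hcong : (fun y => (pd 1 v2 y - pd 2 v1 y) * Real.exp (-(Real.log (h y)))
          + Real.exp (-(Real.log (h y))))
        =ᶠ[nhds x] fun y => (pd 1 v2 y - pd 2 v1 y) * (h y)⁻¹ + (h y)⁻¹ := by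
      filter_upwards [hEinv] with y hy
      rw [hy]
    rw [pd_congr hcong,
      pd_add (f := fun y => (pd 1 v2 y - pd 2 v1 y) * (h y)⁻¹) (g := fun y => (h y)⁻¹)
        (by fun_prop (disch := assumption)) ((differentiableAt_of_contDiffAt2 hhx).inv hne),
      pd_mul (f := fun y => pd 1 v2 y - pd 2 v1 y) (g := fun y => (h y)⁻¹)
        (by fun_prop) ((differentiableAt_of_contDiffAt2 hhx).inv hne),
      pd_sub (differentiableAt_pd hv2x 1) (differentiableAt_pd hv1x 2),
      pd_inv (differentiableAt_of_contDiffAt2 hhx) hne]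
  -- derivatives of the metric coefficients
  have hdg00 : ∀ a : Fin 3,
      pd a (fun y => gMat (fun z => Real.sqrt (h z)) v1 v2 y 0 0) x
        = -pd a h x + 2 * v1 x * pd a v1 x + 2 * v2 x * pd a v2 x := by
    intro a
    have hcong : (fun y => gMat (fun z => Real.sqrt (h z)) v1 v2 y 0 0)
        =ᶠ[nhds x] fun y => -(h y) + ((v1 y) ^ 2 + (v2 y) ^ 2) := by
      filter_upwards [hmem] with y hy
      simp [gMat, Real.sq_sqrt (hpos y hy).le]
      ring
    rw [pd_congr hcong, pd_add (by fun_prop) (by fun_prop),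
      pd_add (by fun_prop) (by fun_prop), pd_neg,
      pd_sq (differentiableAt_of_contDiffAt2 hv1x),
      pd_sq (differentiableAt_of_contDiffAt2 hv2x)]
    ring
  have hdg01 : ∀ a : Fin 3,
      pd a (fun y => gMat (fun z => Real.sqrt (h z)) v1 v2 y 0 1) x = -pd a v1 x := by
    intro a
    have hcong : (fun y => gMat (fun z => Real.sqrt (h z)) v1 v2 y 0 1)
        =ᶠ[nhds x] fun y => -(v1 y) := by
      filter_upwards with y; simp [gMat]
    rw [pd_congr hcong, pd_neg]
  have hdg10 : ∀ a : Fin 3,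
      pd a (fun y => gMat (fun z => Real.sqrt (h z)) v1 v2 y 1 0) x = -pd a v1 x := by
    intro a
    have hcong : (fun y => gMat (fun z => Real.sqrt (h z)) v1 v2 y 1 0)
        =ᶠ[nhds x] fun y => -(v1 y) := by
      filter_upwards with y; simp [gMat]
    rw [pd_congr hcong, pd_neg]
  have hdg02 : ∀ a : Fin 3,
      pd a (fun y => gMat (fun z => Real.sqrt (h z)) v1 v2 y 0 2) x = -pd a v2 x := by
    intro a
    have hcong : (fun y => gMat (fun z => Real.sqrt (h z)) v1 v2 y 0 2)
        =ᶠ[nhds x] fun y => -(v2 y) := by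
      filter_upwards with y; simp [gMat]
    rw [pd_congr hcong, pd_neg]
  have hdg20 : ∀ a : Fin 3,
      pd a (fun y => gMat (fun z => Real.sqrt (h z)) v1 v2 y 2 0) x = -pd a v2 x := by
    intro a
    have hcong : (fun y => gMat (fun z => Real.sqrt (h z)) v1 v2 y 2 0)
        =ᶠ[nhds x] fun y => -(v2 y) := by
      filter_upwards with y; simp [gMat]
    rw [pd_congr hcong, pd_neg]
  have hdg11 : ∀ a : Fin 3,
      pd a (fun y => gMat (fun z => Real.sqrt (h z)) v1 v2 y 1 1) x = 0 := by
    intro a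
    have : (fun y => gMat (fun z => Real.sqrt (h z)) v1 v2 y 1 1) = fun _ => (1:ℝ) := by
      ext y; simp [gMat]
    rw [this, pd_const]
  have hdg22 : ∀ a : Fin 3,
      pd a (fun y => gMat (fun z => Real.sqrt (h z)) v1 v2 y 2 2) x = 0 := by
    intro a
    have : (fun y => gMat (fun z => Real.sqrt (h z)) v1 v2 y 2 2) = fun _ => (1:ℝ) := by
      ext y; simp [gMat]
    rw [this, pd_const]
  have hdg12 : ∀ a : Fin 3,
      pd a (fun y => gMat (fun z => Real.sqrt (h z)) v1 v2 y 1 2) x = 0 := by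
    intro a
    have : (fun y => gMat (fun z => Real.sqrt (h z)) v1 v2 y 1 2) = fun _ => (0:ℝ) := by
      ext y; simp [gMat]
    rw [this, pd_const]
  have hdg21 : ∀ a : Fin 3,
      pd a (fun y => gMat (fun z => Real.sqrt (h z)) v1 v2 y 2 1) x = 0 := by
    intro a
    have : (fun y => gMat (fun z => Real.sqrt (h z)) v1 v2 y 2 1) = fun _ => (0:ℝ) := by
      ext y; simp [gMat]
    rw [this, pd_const]
  -- explicit inverse metric
  have hgi : gInv (fun y => Real.sqrt (h y)) v1 v2 x =
      !![-(h x)⁻¹, -(v1 x) * (h x)⁻¹, -(v2 x) * (h x)⁻¹;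
         -(v1 x) * (h x)⁻¹, 1 - (v1 x) ^ 2 * (h x)⁻¹, -(v1 x) * (v2 x) * (h x)⁻¹;
         -(v2 x) * (h x)⁻¹, -(v1 x) * (v2 x) * (h x)⁻¹, 1 - (v2 x) ^ 2 * (h x)⁻¹] := by
    have hsq : Real.sqrt (h x) ^ 2 = h x := Real.sq_sqrt hxpos.le
    apply Matrix.inv_eq_right_inv
    ext i j
    fin_cases i <;> fin_cases j <;>
      simp [gMat, Matrix.mul_apply, Fin.sum_univ_three, hsq] <;> field_simp <;> ring
  have gi00 : gInv (fun y => Real.sqrt (h y)) v1 v2 x 0 0 = -(h x)⁻¹ := by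
    rw [hgi]; norm_num
  have gi01 : gInv (fun y => Real.sqrt (h y)) v1 v2 x 0 1 = -(v1 x) * (h x)⁻¹ := by
    rw [hgi]; norm_num
  have gi02 : gInv (fun y => Real.sqrt (h y)) v1 v2 x 0 2 = -(v2 x) * (h x)⁻¹ := by
    rw [hgi]; norm_num; rfl
  have gi10 : gInv (fun y => Real.sqrt (h y)) v1 v2 x 1 0 = -(v1 x) * (h x)⁻¹ := by
    rw [hgi]; norm_num
  have gi11 : gInv (fun y => Real.sqrt (h y)) v1 v2 x 1 1 = 1 - (v1 x) ^ 2 * (h x)⁻¹ := by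
    rw [hgi]; norm_num
  have gi12 : gInv (fun y => Real.sqrt (h y)) v1 v2 x 1 2 = -(v1 x) * (v2 x) * (h x)⁻¹ := by
    rw [hgi]; norm_num; rfl
  have gi20 : gInv (fun y => Real.sqrt (h y)) v1 v2 x 2 0 = -(v2 x) * (h x)⁻¹ := by
    rw [hgi]; norm_num; rfl
  have gi21 : gInv (fun y => Real.sqrt (h y)) v1 v2 x 2 1 = -(v1 x) * (v2 x) * (h x)⁻¹ := by
    rw [hgi]; norm_num; rfl
  have gi22 : gInv (fun y => Real.sqrt (h y)) v1 v2 x 2 2 = 1 - (v2 x) ^ 2 * (h x)⁻¹ := by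
    rw [hgi]; norm_num; rfl
  -- first order solved forms
  have h0h : pd 0 h x = -(h x) * (pd 1 v1 x + pd 2 v2 x)
      - v1 x * pd 1 h x - v2 x * pd 2 h x := by
    have := hmass x hx; simp only [matD] at this; linarith
  have h0v1 : pd 0 v1 x = v2 x - pd 1 h x - v1 x * pd 1 v1 x - v2 x * pd 2 v1 x := by
    have := hmom1 x hx; simp only [matD] at this; linarith
  have h0v2 : pd 0 v2 x = -v1 x - pd 2 h x - v1 x * pd 1 v2 x - v2 x * pd 2 v2 x := by
    have := hmom2 x hx; simp only [matD] at this; linarith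
  -- differentiated constraints
  have hDm : ∀ a : Fin 3, pd a (pd 0 h) x
      = -(pd a v1 x * pd 1 h x) - v1 x * pd a (pd 1 h) x
        - pd a v2 x * pd 2 h x - v2 x * pd a (pd 2 h) x
        - pd a h x * (pd 1 v1 x + pd 2 v2 x)
        - h x * (pd a (pd 1 v1) x + pd a (pd 2 v2) x) := by
    intro a
    have hFm : (fun y => pd 0 h y + v1 y * pd 1 h y + v2 y * pd 2 h y
        + h y * (pd 1 v1 y + pd 2 v2 y)) =ᶠ[nhds x] fun _ => (0:ℝ) := by
      filter_upwards [hmem] with y hy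
      have := hmass y hy; simp only [matD] at this; linarith
    have h0 : pd a (fun y => pd 0 h y + v1 y * pd 1 h y + v2 y * pd 2 h y
        + h y * (pd 1 v1 y + pd 2 v2 y)) x = 0 := by
      rw [pd_congr hFm, pd_const]
    simp (disch := fun_prop) only [pd_add, pd_mul] at h0
    linarith
  have hDv1 : ∀ a : Fin 3, pd a (pd 0 v1) x
      = pd a v2 x - pd a (pd 1 h) x
        - pd a v1 x * pd 1 v1 x - v1 x * pd a (pd 1 v1) x
        - pd a v2 x * pd 2 v1 x - v2 x * pd a (pd 2 v1) x := by
    intro a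
    have hFm : (fun y => pd 0 v1 y + v1 y * pd 1 v1 y + v2 y * pd 2 v1 y
        - v2 y + pd 1 h y) =ᶠ[nhds x] fun _ => (0:ℝ) := by
      filter_upwards [hmem] with y hy
      have := hmom1 y hy; simp only [matD] at this; linarith
    have h0 : pd a (fun y => pd 0 v1 y + v1 y * pd 1 v1 y + v2 y * pd 2 v1 y
        - v2 y + pd 1 h y) x = 0 := by
      rw [pd_congr hFm, pd_const]
    simp (disch := fun_prop) only [pd_add, pd_sub, pd_mul] at h0
    linarith
  have hDv2 : ∀ a : Fin 3, pd a (pd 0 v2) x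
      = -pd a v1 x - pd a (pd 2 h) x
        - pd a v1 x * pd 1 v2 x - v1 x * pd a (pd 1 v2) x
        - pd a v2 x * pd 2 v2 x - v2 x * pd a (pd 2 v2) x := by
    intro a
    have hFm : (fun y => pd 0 v2 y + v1 y * pd 1 v2 y + v2 y * pd 2 v2 y
        + v1 y + pd 2 h y) =ᶠ[nhds x] fun _ => (0:ℝ) := by
      filter_upwards [hmem] with y hy
      have := hmom2 y hy; simp only [matD] at this; linarith
    have h0 : pd a (fun y => pd 0 v2 y + v1 y * pd 1 v2 y + v2 y * pd 2 v2 y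
        + v1 y + pd 2 h y) x = 0 := by
      rw [pd_congr hFm, pd_const]
    simp (disch := fun_prop) only [pd_add, pd_mul] at h0
    linarith
  -- symmetry of second derivatives
  have c01h : pd 0 (pd 1 h) x = pd 1 (pd 0 h) x := pd_pd_comm hhx 0 1
  have c02h : pd 0 (pd 2 h) x = pd 2 (pd 0 h) x := pd_pd_comm hhx 0 2
  have c01v1 : pd 0 (pd 1 v1) x = pd 1 (pd 0 v1) x := pd_pd_comm hv1x 0 1
  have c02v1 : pd 0 (pd 2 v1) x = pd 2 (pd 0 v1) x := pd_pd_comm hv1x 0 2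
  have c01v2 : pd 0 (pd 1 v2) x = pd 1 (pd 0 v2) x := pd_pd_comm hv2x 0 1
  have c02v2 : pd 0 (pd 2 v2) x = pd 2 (pd 0 v2) x := pd_pd_comm hv2x 0 2
  have c21h : pd 2 (pd 1 h) x = pd 1 (pd 2 h) x := pd_pd_comm hhx 2 1
  have c21v1 : pd 2 (pd 1 v1) x = pd 1 (pd 2 v1) x := pd_pd_comm hv1x 2 1
  have c21v2 : pd 2 (pd 1 v2) x = pd 1 (pd 2 v2) x := pd_pd_comm hv2x 2 1
  constructor
  · simp only [box, Γsnd, Γfst, matD, Fin.sum_univ_three]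
    simp only [hdg00, hdg01, hdg02, hdg10, hdg20, hdg11, hdg22, hdg12, hdg21]
    simp only [gi00, gi01, gi02, gi10, gi11, gi12, gi20, gi21, gi22]
    simp only [Real.exp_log hxpos, hexpinv, hXi, hlog]
    simp only [hDm 0, hDv1 0, hDv2 0]
    simp only [c01h, c02h, c01v1, c02v1, c01v2, c02v2]
    simp only [hDm 1, hDm 2, hDv1 1, hDv1 2, hDv2 1, hDv2 2]
    simp only [c21h, c21v1, c21v2]
    simp only [h0h, h0v1, h0v2]
    field_simp
    ring
  · simp only [box, Γsnd, Γfst, matD, Fin.sum_univ_three]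
    simp only [hdg00, hdg01, hdg02, hdg10, hdg20, hdg11, hdg22, hdg12, hdg21]
    simp only [gi00, gi01, gi02, gi10, gi11, gi12, gi20, gi21, gi22]
    simp only [Real.exp_log hxpos, hexpinv, hXi, hlog]
    simp only [hDm 0, hDv1 0, hDv2 0]
    simp only [c01h, c02h, c01v1, c02v1, c01v2, c02v2]
    simp only [hDm 1, hDm 2, hDv1 1, hDv1 2, hDv2 1, hDv2 2]
    simp only [c21h, c21v1, c21v2]
    simp only [h0h, h0v1, h0v2]
    field_simp
    ring
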